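/- Let (φ_t) be a non-elliptic semigroup in the unit disc 𝔻 with Koenigs function h. If h(𝔻) is a convex subset of ℂ, then the total speed t ↦ v(t) is non-decreasing on [0,+∞). -/

import Mathlib

open Complex Filter Topology Set MeasureTheory

noncomputable section

/-- The unit disc in the complex plane. -/
def unitDisc : Set ℂ := {z : ℂ | ‖z‖ < 1}

/-- The inverse hyperbolic tangent: `arctanh x = (1/2)·log((1+x)/(1−x))`. -/
def arctanh (x : ℝ) : ℝ := (1 / 2) * Real.log ((1 + x) / (1 - x))

/-- The hyperbolic distance on the unit disc:
`k_𝔻(z,w) = arctanh |(z−w)/(1−conj(z)·w)|`. -/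
def kD (z w : ℂ) : ℝ :=
  arctanh (‖(z - w) / (1 - (starRingEnd ℂ) z * w)‖)

/-- `φ` is a continuous one-parameter semigroup of holomorphic self-maps of the unit disc. -/
structure IsDiscSemigroup (φ : ℝ → ℂ → ℂ) : Prop where
  mapsTo : ∀ t : ℝ, 0 ≤ t → Set.MapsTo (φ t) unitDisc unitDisc
  holo : ∀ t : ℝ, 0 ≤ t → DifferentiableOn ℂ (φ t) unitDisc
  id0 : ∀ z ∈ unitDisc, φ 0 z = z
  comp : ∀ s t : ℝ, 0 ≤ s → 0 ≤ t → ∀ z ∈ unitDisc, φ (t + s) z = φ t (φ s z)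
  cont : ContinuousOn (fun p : ℝ × ℂ => φ p.1 p.2) (Set.Ici 0 ×ˢ unitDisc)

/-- A semigroup in the disc is non-elliptic if it has no fixed point in the disc
for positive times. -/
structure IsNonElliptic (φ : ℝ → ℂ → ℂ) extends IsDiscSemigroup φ : Prop where
  noFixedPoint : ∀ t : ℝ, 0 < t → ∀ z ∈ unitDisc, φ t z ≠ z

/-- `τ` is the Denjoy-Wolff point of the semigroup `φ`: a boundary point to which
all orbits converge. -/
def IsDenjoyWolff (φ : ℝ → ℂ → ℂ) (τ : ℂ) : Prop :=
  ‖τ‖ = 1 ∧ ∀ z ∈ unitDisc, Tendsto (fun t => φ t z) atTop (𝓝 τ)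

/-- `h` is a Koenigs function of the semigroup `φ`: univalent on the disc with
`h(φ_t(z)) = h(z) + it`. -/
def IsKoenigs (φ : ℝ → ℂ → ℂ) (h : ℂ → ℂ) : Prop :=
  DifferentiableOn ℂ h unitDisc ∧ Set.InjOn h unitDisc ∧
    ∀ t : ℝ, 0 ≤ t → ∀ z ∈ unitDisc, h (φ t z) = h z + Complex.I * t

/-- `p` is the hyperbolic orthogonal projection onto the geodesic `(−1,1)·τ`:
for every `z` in the disc, `p z` lies on the geodesic and minimizes the hyperbolic
distance from `z` to the geodesic. -/
def IsOrthProjection (τ : ℂ) (p : ℂ → ℂ) : Prop :=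
  ∀ z ∈ unitDisc,
    (∃ r : ℝ, r ∈ Set.Ioo (-1 : ℝ) 1 ∧ p z = (r : ℂ) * τ) ∧
    ∀ r : ℝ, r ∈ Set.Ioo (-1 : ℝ) 1 → kD z (p z) ≤ kD z ((r : ℂ) * τ)

/-- The total speed `v(t) = k_𝔻(0, φ_t(0))` of a semigroup. -/
def totalSpeed (φ : ℝ → ℂ → ℂ) (t : ℝ) : ℝ := kD 0 (φ t 0)

/-- The orthogonal speed `v^o(t) = k_𝔻(0, π(φ_t(0)))` of a semigroup, relative to the
orthogonal projection `p` onto the geodesic `(−1,1)·τ`. -/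
def orthSpeed (φ : ℝ → ℂ → ℂ) (p : ℂ → ℂ) (t : ℝ) : ℝ := kD 0 (p (φ t 0))

/-- `δ⁺(t)`: the truncated distance from `z₀ + it` to the part of the complement of `Ω`
lying to the right of the vertical line through `z₀`. -/
def deltaPlus (Ω : Set ℂ) (z₀ : ℂ) (t : ℝ) : ℝ :=
  min t (sInf {d : ℝ | ∃ w : ℂ, w ∉ Ω ∧ z₀.re ≤ w.re ∧ d = ‖w - (z₀ + Complex.I * t)‖})

/-- `δ⁻(t)`: the truncated distance from `z₀ + it` to the part of the complement of `Ω`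
lying to the left of the vertical line through `z₀`. -/
def deltaMinus (Ω : Set ℂ) (z₀ : ℂ) (t : ℝ) : ℝ :=
  min t (sInf {d : ℝ | ∃ w : ℂ, w ∉ Ω ∧ w.re ≤ z₀.re ∧ d = ‖w - (z₀ + Complex.I * t)‖})

/-- `Ω` is quasi-symmetric with respect to vertical axes. -/
def QuasiSymmetric (Ω : Set ℂ) : Prop :=
  ∃ z₀ ∈ Ω, ∃ K : ℝ, 0 < K ∧ ∀ t : ℝ, 0 ≤ t →
    K⁻¹ * deltaMinus Ω z₀ t ≤ deltaPlus Ω z₀ t ∧ deltaPlus Ω z₀ t ≤ K * deltaMinus Ω z₀ t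

/-- `Ω` is starlike with respect to `w₀`: every segment from `w₀` to a point of `Ω`
is contained in `Ω`. -/
def StarlikeWrt (Ω : Set ℂ) (w₀ : ℂ) : Prop :=
  ∀ w ∈ Ω, ∀ s : ℝ, s ∈ Set.Icc (0 : ℝ) 1 → (1 - (s : ℂ)) * w₀ + (s : ℂ) * w ∈ Ω

/-- The orbit of `0` converges non-tangentially to `τ`:
`limsup_{t→+∞} |τ − φ_t(0)|/(1 − |φ_t(0)|) < +∞`. -/
def ConvergesNonTangentially (φ : ℝ → ℂ → ℂ) (τ : ℂ) : Prop :=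
  Filter.limsup (fun t : ℝ =>
    ((‖τ - φ t 0‖ / (1 - ‖φ t 0‖) : ℝ) : EReal)) atTop < ⊤

/-- `f` is eventually non-decreasing. -/
def EventuallyNondecreasing (f : ℝ → ℝ) : Prop :=
  ∃ T : ℝ, ∀ s t : ℝ, T ≤ s → s ≤ t → f s ≤ f t

/-- The Cayley transform from the unit disc to the right half-plane. -/
def cayley (z : ℂ) : ℂ := (1 + z) / (1 - z)

/-- The inverse Cayley transform, from the right half-plane to the unit disc. -/
def cayleyInv (w : ℂ) : ℂ := (w - 1) / (w + 1)

/-- `Θ_ρ := {iy : y ∈ ℝ, |y| ≥ ρ}`, a subset of the imaginary axis. -/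
def Theta (ρ : ℝ) : Set ℂ := {z : ℂ | ∃ y : ℝ, z = Complex.I * (y : ℂ) ∧ ρ ≤ |y|}

/-- `Γ*_t := {iy : |y| ≥ inf_{u ≥ t} ρ_u}`. -/
def GammaStar (ρ : ℝ → ℝ) (t : ℝ) : Set ℂ :=
  {z : ℂ | ∃ y : ℝ, z = Complex.I * (y : ℂ) ∧ sInf {r : ℝ | ∃ u : ℝ, t ≤ u ∧ r = ρ u} ≤ |y|}

/-- The harmonic measure at `w` (a point of the right half-plane) of a Borel subset `E`
of the imaginary axis, with respect to the right half-plane: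
`ω(w,E,ℍ) = (1/π) ∫_{{s : is ∈ E}} Re w/((Re w)² + (Im w − s)²) ds`. -/
def omegaH (w : ℂ) (E : Set ℂ) : ℝ :=
  (1 / Real.pi) *
    ∫ s in {s : ℝ | Complex.I * (s : ℂ) ∈ E}, w.re / (w.re ^ 2 + (w.im - s) ^ 2)

/-- The Euclidean arclength of the closed arc of the unit circle containing `1`
with endpoints `a` and `conj a` (where `Im a > 0`), namely `2·arg a`. -/
def arcLength (a : ℂ) : ℝ := 2 * Complex.arg a

/-- The harmonic measure at `0` with respect to the unit disc of the closed arc of the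
unit circle containing `1` with endpoints `a` and `conj a`: `ℓ(A)/(2π)`. -/
def omegaDiscZero (a : ℂ) : ℝ := arcLength a / (2 * Real.pi)

/-- `Π_α := {z ∈ ℂ : Im z > |Re z|^α}`. -/
def PiDom (α : ℝ) : Set ℂ := {z : ℂ | |z.re| ^ α < z.im}

/-- `W(θ) := {z ≠ 0 : arg z ∈ (π/2 − θ, π/2)}`. -/
def Wsector (θ : ℝ) : Set ℂ :=
  {z : ℂ | z ≠ 0 ∧ Complex.arg z ∈ Set.Ioo (Real.pi / 2 - θ) (Real.pi / 2)}

/-- `Ξ(α,θ) := ({Re z ≤ 0} ∩ Π_α) ∪ W(θ)`. -/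
def Xi (α θ : ℝ) : Set ℂ := ({z : ℂ | z.re ≤ 0} ∩ PiDom α) ∪ Wsector θ


section AuxSpeedConvex

lemma unitDisc_eq' : unitDisc = Metric.ball (0:ℂ) 1 := by
  ext z; simp [unitDisc, Metric.mem_ball, Complex.dist_eq]

lemma isOpen_unitDisc' : IsOpen unitDisc := by
  rw [unitDisc_eq']; exact Metric.isOpen_ball

lemma kD_zero' (w : ℂ) : kD 0 w = arctanh (‖w‖) := by
  simp [kD]

lemma arctanh_mono' {a b : ℝ} (ha : 0 ≤ a) (hab : a ≤ b) (hb : b < 1) :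
    arctanh a ≤ arctanh b := by
  unfold arctanh
  have h1 : (0:ℝ) < 1 - b := by linarith
  have h2 : (0:ℝ) < 1 - a := by linarith
  have pos : (0:ℝ) < (1+a)/(1-a) := by positivity
  have key : (1+a)/(1-a) ≤ (1+b)/(1-b) := by
    rw [div_le_div_iff₀ h2 h1]; nlinarith
  have := Real.log_le_log pos key
  linarith

/-- Two distinct points near any point of the disc. -/
lemma exists_ne_near {ζ : ℂ} (hζ : ζ ∈ unitDisc) {ε : ℝ} (hε : 0 < ε) :
    ∃ w : ℂ, w ≠ ζ ∧ w ∈ unitDisc ∧ w ∈ Metric.ball ζ ε := by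
  have hζ1 : ‖ζ‖ < 1 := hζ
  set δ : ℝ := min ε (1 - ‖ζ‖) with hδdef
  have hδ : 0 < δ := lt_min hε (by linarith)
  refine ⟨ζ + (δ/2 : ℝ), ?_, ?_, ?_⟩
  · intro hcon
    have h1 : ((δ/2 : ℝ) : ℂ) = 0 := by linear_combination hcon
    have : (δ/2 : ℝ) = 0 := by exact_mod_cast h1
    linarith
  · have h2 : ‖(ζ + (δ/2 : ℝ))‖ ≤ ‖ζ‖ + ‖((δ/2 : ℝ) : ℂ)‖ :=
      norm_add_le ζ ((δ/2 : ℝ) : ℂ)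
    have h3 : ‖((δ/2 : ℝ) : ℂ)‖ = δ/2 := by
      rw [Complex.norm_real, Real.norm_eq_abs, abs_of_pos (by linarith)]
    have hδle : δ ≤ 1 - ‖ζ‖ := min_le_right _ _
    show ‖(ζ + (δ/2 : ℝ))‖ < 1
    rw [h3] at h2
    linarith
  · have h4 : dist (ζ + (δ/2 : ℝ)) ζ = δ/2 := by
      rw [Complex.dist_eq, add_sub_cancel_left, Complex.norm_real, Real.norm_eq_abs,
        abs_of_pos (by linarith)]
    rw [Metric.mem_ball, h4]
    have : δ ≤ ε := min_le_left _ _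
    linarith

end AuxSpeedConvex

/-- **Proposition 3.3:** if the image of the Koenigs function is convex, the total speed
is non-decreasing on `[0,+∞)`. -/
theorem totalSpeed_monotoneOn_of_convex
    (φ : ℝ → ℂ → ℂ) (h : ℂ → ℂ)
    (hφ : IsNonElliptic φ) (hKoe : IsKoenigs φ h)
    (hconv : Convex ℝ (h '' unitDisc)) :
    MonotoneOn (totalSpeed φ) (Set.Ici (0 : ℝ)) := by
  have h0D : (0:ℂ) ∈ unitDisc := by simp [unitDisc]
  obtain ⟨hdiff, hinj, hfun⟩ := hKoe
  intro s hs t ht hst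
  have hsD : φ s 0 ∈ unitDisc := hφ.mapsTo s hs h0D
  have htD : φ t 0 ∈ unitDisc := hφ.mapsTo t ht h0D
  -- the key inequality on moduli
  have habs : ‖(φ s 0)‖ ≤ ‖(φ t 0)‖ := by
    rcases eq_or_lt_of_le (show (0:ℝ) ≤ s from hs) with hs0 | hs0
    · have : φ s 0 = 0 := by rw [← hs0]; exact hφ.id0 0 h0D
      simp [this]
    · -- now 0 < s ≤ t
      have ht0 : (0:ℝ) < t := lt_of_lt_of_le hs0 hst
      set p : ℂ := h 0 with hp
      set lam : ℝ := s / t with hlam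
      have hlam0 : 0 < lam := div_pos hs0 ht0
      have hlam1 : lam ≤ 1 := by
        rw [hlam, div_le_one ht0]; exact hst
      set fz : ℂ → ℂ := fun w => (lam : ℂ) * w + (1 - (lam : ℂ)) * p with hfz
      have hfimg : ∀ z ∈ unitDisc, fz (h z) ∈ h '' unitDisc := by
        intro z hz
        have := hconv (Set.mem_image_of_mem h hz) (Set.mem_image_of_mem h h0D)
          (le_of_lt hlam0) (by linarith : (0:ℝ) ≤ 1 - lam) (by ring)
        simpa [fz, Complex.real_smul, sub_mul, Complex.ofReal_sub, Complex.ofReal_one]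
          using this
      -- choose F with h (F z) = fz (h z)
      have hex : ∀ z : ℂ, ∃ u : ℂ, u ∈ unitDisc ∧ (z ∈ unitDisc → h u = fz (h z)) := by
        intro z
        by_cases hz : z ∈ unitDisc
        · obtain ⟨u, hu, hu2⟩ := hfimg z hz
          exact ⟨u, hu, fun _ => hu2⟩
        · exact ⟨0, h0D, fun h' => absurd h' hz⟩
      choose F hFD hFh using hex
      -- basic values of F
      have hF0 : F 0 = 0 := by
        apply hinj (hFD 0) h0D
        rw [hFh 0 h0D]; simp [fz]; ring
      have hlt : lam * t = s := by rw [hlam]; field_simp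
      have hlamt : (lam : ℂ) * (t : ℝ) = (s : ℝ) := by
        rw [← hlt]; push_cast; ring
      have hFt : F (φ t 0) = φ s 0 := by
        apply hinj (hFD _) hsD
        rw [hFh _ htD, hfun t ht 0 h0D, hfun s hs 0 h0D]
        simp only [fz]
        rw [show (lam:ℂ) * (h 0 + Complex.I * t) + (1 - (lam:ℂ)) * p
            = p + Complex.I * ((lam:ℂ) * (t:ℝ)) by rw [hp]; ring]
        rw [hlamt, hp]
      -- analyticity of h
      have hA : AnalyticOnNhd ℂ h unitDisc := hdiff.analyticOnNhd isOpen_unitDisc'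
      -- h is not locally constant
      have hnc : ∀ ζ ∈ unitDisc, ¬ (∀ᶠ x in 𝓝 ζ, h x = h ζ) := by
        intro ζ hζ hev
        obtain ⟨ε, hε, hball⟩ := Metric.eventually_nhds_iff_ball.mp hev
        obtain ⟨w, hwne, hwD, hwb⟩ := exists_ne_near hζ hε
        exact hwne (hinj hwD hζ (hball w hwb))
      -- local openness of h
      have hopen : ∀ ζ ∈ unitDisc, ∀ V ∈ 𝓝 ζ, h '' V ∈ 𝓝 (h ζ) := by
        intro ζ hζ V hV
        rcases (hA ζ hζ).eventually_constant_or_nhds_le_map_nhds with hc | hle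
        · exact absurd hc (hnc ζ hζ)
        · exact hle (Filter.image_mem_map hV)
      -- continuity of F on the disc
      have hFcont : ∀ z ∈ unitDisc, ContinuousAt F z := by
        intro z hz
        rw [ContinuousAt, Filter.tendsto_def]
        intro U hU
        have hFzD : F z ∈ unitDisc := hFD z
        set V : Set ℂ := interior U ∩ unitDisc with hV
        have hVopen : IsOpen V := isOpen_interior.inter isOpen_unitDisc'
        have hFzV : F z ∈ V := ⟨mem_interior_iff_mem_nhds.mpr hU, hFzD⟩
        have himg : h '' V ∈ 𝓝 (h (F z)) := hopen (F z) hFzD V (hVopen.mem_nhds hFzV)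
        rw [hFh z hz] at himg
        have hcont : ContinuousAt (fun x => fz (h x)) z := by
          have hh : ContinuousAt h z :=
            (hdiff.differentiableAt (isOpen_unitDisc'.mem_nhds hz)).continuousAt
          exact (((continuous_const.mul continuous_id).add continuous_const).continuousAt).comp hh
        have hW : (fun x => fz (h x)) ⁻¹' (h '' V) ∈ 𝓝 z := hcont himg
        refine Filter.mem_of_superset (Filter.inter_mem hW (isOpen_unitDisc'.mem_nhds hz)) ?_
        rintro x ⟨hxW, hxD⟩
        obtain ⟨u, huV, huh⟩ := hxW
        have : F x = u := hinj (hFD x) (huV.2) (by rw [hFh x hxD, huh])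
        show F x ∈ U
        rw [this]
        exact interior_subset huV.1
      -- injectivity of F on the disc
      have hlamne : (lam : ℂ) ≠ 0 := by exact_mod_cast ne_of_gt hlam0
      have hFinj : Set.InjOn F unitDisc := by
        intro a ha b hb hab
        have h1 : fz (h a) = fz (h b) := by rw [← hFh a ha, ← hFh b hb, hab]
        have h2 : (lam:ℂ) * h a = (lam:ℂ) * h b := by
          simp only [fz] at h1; linear_combination h1
        exact hinj ha hb (mul_left_cancel₀ hlamne h2)
      -- h' is not locally zero
      have hderiv_nloc : ∀ ζ ∈ unitDisc, ¬ (∀ᶠ x in 𝓝 ζ, deriv h x = 0) := by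
        intro ζ hζ hev
        obtain ⟨ε, hε, hball⟩ := Metric.eventually_nhds_iff_ball.mp hev
        obtain ⟨w, hwne, hwD, hwb⟩ := exists_ne_near hζ hε
        set δ : ℝ := min ε (1 - ‖ζ‖) with hδdef
        -- work on ball ζ δ which is inside the disc and inside ball ζ ε
        have hζ1 : ‖ζ‖ < 1 := hζ
        have hδ : 0 < δ := lt_min hε (by linarith)
        have hsubD : Metric.ball ζ δ ⊆ unitDisc := by
          intro x hx
          rw [Metric.mem_ball, Complex.dist_eq] at hx
          have : ‖x‖ ≤ ‖(x - ζ)‖ + ‖ζ‖ := by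
            simpa using norm_add_le (x - ζ) ζ
          have hδle : δ ≤ 1 - ‖ζ‖ := min_le_right _ _
          show ‖x‖ < 1
          linarith
        have hsubε : Metric.ball ζ δ ⊆ Metric.ball ζ ε :=
          Metric.ball_subset_ball (min_le_left _ _)
        have hconst : ∀ x ∈ Metric.ball ζ δ, ∀ y ∈ Metric.ball ζ δ, h x = h y := by
          intro x hx y hy
          refine (convex_ball ζ δ).is_const_of_fderivWithin_eq_zero
            (hdiff.mono hsubD) ?_ hx hy
          intro u hu
          rw [fderivWithin_of_isOpen Metric.isOpen_ball hu]
          have hdu : DifferentiableAt ℂ h u :=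
            hdiff.differentiableAt (isOpen_unitDisc'.mem_nhds (hsubD hu))
          have h0 : HasDerivAt h 0 u := by
            have := hdu.hasDerivAt
            rwa [hball u (hsubε hu)] at this
          have := h0.hasFDerivAt.fderiv
          rw [this]
          ext; simp
        obtain ⟨w', hw'ne, hw'D, hw'b⟩ := exists_ne_near hζ hδ
        exact hw'ne (hinj hw'D hζ (hconst w' hw'b ζ (Metric.mem_ball_self hδ)))
      -- differentiability of F on the disc
      have hFdiffAt : ∀ z ∈ unitDisc, DifferentiableAt ℂ F z := by
        intro z hz
        have hz1 : ‖z‖ < 1 := hz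
        set r : ℝ := (1 - ‖z‖) / 2 with hr
        have hrpos : 0 < r := by rw [hr]; linarith
        have hball : Metric.closedBall z r ⊆ unitDisc := by
          intro x hx
          rw [Metric.mem_closedBall, Complex.dist_eq] at hx
          have : ‖x‖ ≤ ‖(x - z)‖ + ‖z‖ := by
            simpa using norm_add_le (x - z) z
          show ‖x‖ < 1
          rw [hr] at hx
          linarith
        have hcontOn : ContinuousOn F (Metric.closedBall z r) := fun x hx =>
          (hFcont x (hball hx)).continuousWithinAt
        set K : Set ℂ := F '' Metric.closedBall z r with hK
        have hKcp : IsCompact K := (isCompact_closedBall z r).image_of_continuousOn hcontOn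
        have hKne : K.Nonempty := ⟨F z, Set.mem_image_of_mem _ (Metric.mem_closedBall_self hrpos.le)⟩
        obtain ⟨x₀, hx₀K, hx₀max⟩ := hKcp.exists_isMaxOn hKne (continuous_norm.continuousOn)
        set r' : ℝ := ‖x₀‖ with hr'
        have hr'1 : r' < 1 := by
          obtain ⟨y, hy, hyx⟩ := hx₀K
          show ‖x₀‖ < 1
          rw [← hyx]
          exact hFD y
        have hKsub : K ⊆ Metric.closedBall 0 r' := by
          intro y hy
          rw [Metric.mem_closedBall, Complex.dist_eq, sub_zero]
          exact hx₀max hy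
        set Zb : Set ℂ := {x : ℂ | x ∈ Metric.closedBall (0:ℂ) r' ∧ deriv h x = 0} with hZb
        have hZbD : Zb ⊆ unitDisc := by
          intro x hx
          have := hx.1
          rw [Metric.mem_closedBall, Complex.dist_eq, sub_zero] at this
          show ‖x‖ < 1
          linarith
        have hZbeq : Zb = Metric.closedBall (0:ℂ) r' ∩ (deriv h) ⁻¹' {0} := by
          ext x; simp [Zb]
        have hcbD : Metric.closedBall (0:ℂ) r' ⊆ unitDisc := by
          intro x hx
          rw [Metric.mem_closedBall, Complex.dist_eq, sub_zero] at hx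
          show ‖x‖ < 1
          linarith
        have hZbclosed : IsClosed Zb := by
          rw [hZbeq]
          exact ContinuousOn.preimage_isClosed_of_isClosed
            ((hA.deriv.continuousOn).mono hcbD) Metric.isClosed_closedBall isClosed_singleton
        have hZbcp : IsCompact Zb :=
          (isCompact_closedBall (0:ℂ) r').of_isClosed_subset hZbclosed (fun x hx => hx.1)
        have hZbdisc : DiscreteTopology Zb := by
          rw [discreteTopology_subtype_iff]
          intro x hx
          have hxD : x ∈ unitDisc := hZbD hx
          rcases (hA.deriv x hxD).eventually_eq_zero_or_eventually_ne_zero with hc | hne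
          · exact absurd hc (hderiv_nloc x hxD)
          · rw [Filter.inf_principal_eq_bot]
            refine Filter.mem_of_superset hne ?_
            intro y hy hyZb
            exact hy hyZb.2
        have hZbfin : Zb.Finite := hZbcp.finite (isDiscrete_iff_discreteTopology.mpr hZbdisc)
        set S : Set ℂ := {w : ℂ | w ∈ Metric.closedBall z r ∧ deriv h (F w) = 0} with hS
        have hSfin : S.Finite := by
          refine Set.Finite.of_finite_image (hZbfin.subset ?_) (hFinj.mono ?_)
          · rintro y ⟨w, hw, rfl⟩
            exact ⟨hKsub (Set.mem_image_of_mem F hw.1), hw.2⟩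
          · exact fun w hw => hball hw.1
        set R : NNReal := ⟨r, hrpos.le⟩ with hR
        have hRr : (R : ℝ) = r := rfl
        have hps : HasFPowerSeriesOnBall F (cauchyPowerSeries F z R) z R := by
          refine Complex.hasFPowerSeriesOnBall_of_differentiable_off_countable
            hSfin.countable (by rw [hRr]; exact hcontOn) ?_ hrpos
          intro x hx
          rw [hRr] at hx
          obtain ⟨hxball, hxS⟩ := hx
          have hxcb : x ∈ Metric.closedBall z r := Metric.ball_subset_closedBall hxball
          have hxD : x ∈ unitDisc := hball hxcb
          have hdne : deriv h (F x) ≠ 0 := fun hcon => hxS ⟨hxcb, hcon⟩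
          set ζ : ℂ := F x with hζ
          have hζD : ζ ∈ unitDisc := hFD x
          obtain ⟨q, hq⟩ := hA ζ hζD
          have hsd := hq.hasStrictDerivAt
          have hdval := hsd.hasDerivAt.deriv
          rw [← hdval] at hsd
          -- local inverse g of h at ζ
          set g : ℂ → ℂ := hsd.localInverse h (deriv h ζ) ζ hdne with hg
          have hgd : HasStrictDerivAt g (deriv h ζ)⁻¹ (h ζ) := hsd.to_localInverse hdne
          have hleftinv : ∀ᶠ u in 𝓝 ζ, g (h u) = u :=
            (hsd.hasStrictFDerivAt_equiv hdne).eventually_left_inverse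
          have hhζ : h ζ = fz (h x) := hFh x hxD
          have hGdiff : DifferentiableAt ℂ (fun y => g (fz (h y))) x := by
            have hgda : DifferentiableAt ℂ g (fz (h x)) := by
              rw [← hhζ]; exact hgd.hasDerivAt.differentiableAt
            have hhx : DifferentiableAt ℂ h x :=
              hdiff.differentiableAt (isOpen_unitDisc'.mem_nhds hxD)
            have hfzd : Differentiable ℂ fz := by
              simp only [hfz]
              exact (differentiable_const _ |>.mul differentiable_id).add
                (differentiable_const _)
            exact hgda.comp x ((hfzd (h x)).comp x hhx)
          have hcongr : F =ᶠ[𝓝 x] fun y => g (fz (h y)) := by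
            have h1 : ∀ᶠ y in 𝓝 x, g (h (F y)) = F y :=
              (hFcont x hxD).eventually hleftinv
            have h2 : ∀ᶠ y in 𝓝 x, y ∈ unitDisc := isOpen_unitDisc'.mem_nhds hxD
            filter_upwards [h1, h2] with y hy1 hy2
            rw [← hy1, hFh y hy2]
          exact hGdiff.congr_of_eventuallyEq hcongr
        have : AnalyticAt ℂ F z := hps.analyticAt
        exact this.differentiableAt
      -- Schwarz lemma
      have hDiffOn : DifferentiableOn ℂ F (Metric.ball 0 1) := fun x hx =>
        (hFdiffAt x (by rw [unitDisc_eq']; exact hx)).differentiableWithinAt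
      have hmaps : Set.MapsTo F (Metric.ball 0 1) (Metric.ball 0 1) := by
        intro x _
        rw [← unitDisc_eq']
        exact hFD x
      have hSch := Complex.norm_le_norm_of_mapsTo_ball hDiffOn (hmaps.mono_right Metric.ball_subset_closedBall) hF0
        (show ‖(φ t 0)‖ < 1 from htD)
      rwa [hFt] at hSch
  -- conclude via monotonicity of arctanh
  simp only [totalSpeed, kD_zero']
  exact arctanh_mono' (norm_nonneg _) habs htD


end
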